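/- Let M be a finite-dimensional von Neumann algebra and p ∈ M a projection. Then p is central (px = xp for all x ∈ M) if and only if the left ideal pM is linearly spanned by projections of M contained in pM. -/
import Mathlib

open Polynomial ComplexStarModule Complex

section Aux

variable {M : Type*} [NormedRing M] [StarRing M] [CStarRing M] [NormedAlgebra ℂ M]
    [StarModule ℂ M] [FiniteDimensional ℂ M]

set_option linter.unusedSectionVars false in
lemma aux_spec_finite (a : M) : (spectrum ℝ a).Finite := by
  have hC : (spectrum ℂ a).Finite := by
    rcases subsingleton_or_nontrivial M with h | h
    · refine Set.Finite.subset Set.finite_empty fun z hz => ?_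
      exact absurd (isUnit_of_subsingleton _) (spectrum.mem_iff.mp hz)
    · have hint : IsIntegral ℂ a := Algebra.IsIntegral.isIntegral a
      refine (Polynomial.finite_setOf_isRoot (minpoly.ne_zero hint)).subset fun z hz => ?_
      have h2 := spectrum.subset_polynomial_aeval a (minpoly ℂ a) ⟨z, hz, rfl⟩
      rw [minpoly.aeval, spectrum.zero_eq] at h2
      simpa [Polynomial.IsRoot] using h2
  have he : spectrum ℝ a = algebraMap ℝ ℂ ⁻¹' spectrum ℂ a :=
    (spectrum.preimage_algebraMap ℂ).symm
  rw [he]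
  exact hC.preimage ((algebraMap ℝ ℂ).injective.injOn)

lemma aux_mem_span (p a : M) (ha : IsSelfAdjoint a) (hpa : p * a = a) :
    a ∈ Submodule.span ℂ {q : M | (∃ x : M, q = p * x) ∧ star q = q ∧ q * q = q} := by
  classical
  letI : CompleteSpace M := FiniteDimensional.complete ℂ M
  letI : CStarAlgebra M := {}
  have hfin := aux_spec_finite a
  set s : Finset ℝ := hfin.toFinset with hs
  have hcont : ∀ f : ℝ → ℝ, ContinuousOn f (spectrum ℝ a) := fun f => hfin.continuousOn f
  set χ : ℝ → ℝ → ℝ := fun lam x => if x = lam then 1 else 0 with hχ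
  set F : ℝ → ℝ → ℝ := fun lam x => if x = lam then lam else 0 with hF
  -- a is the sum of λ • (spectral projection at λ)
  have h1 : cfc (fun x : ℝ => ∑ lam ∈ s, F lam x) a = a := by
    conv_rhs => rw [← cfc_id ℝ a ha]
    apply cfc_congr
    intro x hx
    have hxs : x ∈ s := hfin.mem_toFinset.mpr hx
    simp [hF, Finset.sum_ite_eq, hxs]
  have h2 : cfc (fun x : ℝ => ∑ lam ∈ s, F lam x) a = ∑ lam ∈ s, cfc (F lam) a := by
    have := cfc_sum F a s (fun i _ => hcont _)
    rw [← this]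
    congr 1
    ext x
    simp
  have h3 : ∀ lam : ℝ, cfc (F lam) a = lam • cfc (χ lam) a := by
    intro lam
    rw [← cfc_const_mul lam (χ lam) a (hcont _)]
    congr 1
    funext x
    simp [hF, hχ, mul_ite]
  have hdecomp : a = ∑ lam ∈ s, lam • cfc (χ lam) a :=
    (h1.symm.trans h2).trans (Finset.sum_congr rfl fun lam _ => h3 lam)
  rw [hdecomp]
  refine Submodule.sum_mem _ fun lam _ => ?_
  rcases eq_or_ne lam 0 with rfl | hlam
  · simp
  · -- the spectral projection lies in the generating set
    have hq : cfc (χ lam) a ∈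
        {q : M | (∃ x : M, q = p * x) ∧ star q = q ∧ q * q = q} := by
      refine ⟨?_, ?_, ?_⟩
      · -- cfc (χ lam) a = p * _
        set t : Finset ℝ := insert 0 s with ht
        set g : ℝ[X] := Lagrange.interpolate t id (χ lam) with hg
        have hgeval : ∀ x ∈ t, g.eval x = χ lam x := fun x hx =>
          Lagrange.eval_interpolate_at_node _ (Function.injective_id.injOn) hx
        have hqg : cfc (χ lam) a = aeval a g := by
          rw [← cfc_polynomial g a ha]
          apply cfc_congr
          intro x hx
          have hxt : x ∈ t := Finset.mem_insert_of_mem (hfin.mem_toFinset.mpr hx)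
          exact (hgeval x hxt).symm
        have hg0 : g.coeff 0 = 0 := by
          rw [Polynomial.coeff_zero_eq_eval_zero, hgeval 0 (Finset.mem_insert_self 0 s)]
          simp [hχ, Ne.symm hlam]
        obtain ⟨h, hh⟩ := Polynomial.X_dvd_iff.mpr hg0
        refine ⟨aeval a g, ?_⟩
        conv_lhs => rw [hqg]
        rw [hh, map_mul, aeval_X, ← mul_assoc, hpa]
      · exact (cfc_predicate (χ lam) a).star_eq
      · rw [← cfc_mul (χ lam) (χ lam) a (hcont _) (hcont _)]
        apply cfc_congr
        intro x _
        simp only [hχ]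
        split <;> simp
    have : (lam : ℂ) • cfc (χ lam) a = lam • cfc (χ lam) a := by
      rw [← algebraMap_smul (R := ℝ) ℂ lam (cfc (χ lam) a)]
      norm_num
    rw [← this]
    exact Submodule.smul_mem _ _ (Submodule.subset_span hq)

end Aux

/-- Let `M` be a finite-dimensional von Neumann algebra (modelled
as a finite-dimensional C*-algebra) and `p ∈ M` a projection.  Then `p` is central
if and only if the left ideal `pM` is linearly spanned by the projections of `M`
contained in `pM`. -/
theorem central_iff_span_of_projections
    (M : Type*) [NormedRing M] [StarRing M] [CStarRing M] [NormedAlgebra ℂ M]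
    [StarModule ℂ M] [FiniteDimensional ℂ M]
    (p : M) (hpstar : star p = p) (hpidem : p * p = p) :
    (∀ x : M, p * x = x * p) ↔
      Submodule.span ℂ
          {q : M | (∃ x : M, q = p * x) ∧ star q = q ∧ q * q = q}
        = LinearMap.range (LinearMap.mulLeft ℂ p) := by
  set S := {q : M | (∃ x : M, q = p * x) ∧ star q = q ∧ q * q = q} with hS
  constructor
  · intro hc
    apply le_antisymm
    · rw [Submodule.span_le]
      rintro q ⟨⟨x, hx⟩, -, -⟩
      exact ⟨x, hx.symm⟩
    · rintro y ⟨x, rfl⟩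
      simp only [LinearMap.mulLeft_apply]
      set y := p * x with hy
      have hpy : p * y = y := by rw [hy, ← mul_assoc, hpidem]
      have hpystar : p * star y = star y := by
        have h1 : star y = star x * p := by rw [hy, star_mul, hpstar]
        rw [h1, ← hc (star x), ← mul_assoc, hpidem, hc (star x)]
      have hre : p * (ℜ y : M) = (ℜ y : M) := by
        rw [realPart_apply_coe, mul_smul_comm, mul_add, hpy, hpystar]
      have him : p * (ℑ y : M) = (ℑ y : M) := by
        rw [imaginaryPart_apply_coe, mul_smul_comm, mul_smul_comm, mul_sub, hpy, hpystar]
      have hmem1 : (ℜ y : M) ∈ Submodule.span ℂ S := aux_mem_span p _ (ℜ y).prop hre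
      have hmem2 : (ℑ y : M) ∈ Submodule.span ℂ S := aux_mem_span p _ (ℑ y).prop him
      have := realPart_add_I_smul_imaginaryPart y
      rw [← this]
      exact Submodule.add_mem _ hmem1 (Submodule.smul_mem _ _ hmem2)
  · intro hspan x
    -- every element of the span satisfies z * p = z
    have hT : ∀ z ∈ Submodule.span ℂ S, z * p = z := by
      have hle : Submodule.span ℂ S ≤
          LinearMap.ker (LinearMap.mulRight ℂ p - LinearMap.id) := by
        rw [Submodule.span_le]
        rintro q ⟨⟨z, hz⟩, hqstar, -⟩
        have hpq : p * q = q := by rw [hz, ← mul_assoc, hpidem]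
        have hqp : q * p = q := by
          have := congrArg star hpq
          rwa [star_mul, hpstar, hqstar] at this
        simp only [SetLike.mem_coe, LinearMap.mem_ker, LinearMap.sub_apply,
          LinearMap.mulRight_apply, LinearMap.id_apply, sub_eq_zero, hqp]
      intro z hz
      have := hle hz
      simpa [sub_eq_zero] using this
    have key : ∀ z : M, p * z * p = p * z := by
      intro z
      have hmem : p * z ∈ Submodule.span ℂ S := by
        rw [hspan]; exact ⟨z, rfl⟩
      exact hT _ hmem
    have h1 := key x
    have h2 := key (star x)
    have h3 : p * x * p = x * p := by
      have h4 := congrArg star h2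
      simp only [star_mul, star_star, hpstar] at h4
      rwa [← mul_assoc] at h4
    rw [← h1, h3]
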